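/- Let W be the set of d×d real matrices W with spectral radius of W∘W less than 1, where ∘ denotes the Hadamard product, and assume all entries of W are nonzero. Define h(W) = −log det(I − W∘W) and η(U,W) = −½((I − W∘W)(log(I − U∘U) − log(I − W∘W))) ⊘ W, where ⊘ is entrywise division and log is the matrix logarithm. Then, assuming I − W∘W and I − U∘U commute with each other's logarithms appropriately (e.g., all matrices involved are simultaneously diagonalizable), h(U) − h(W) − ⟨η(U,W), ∇h(W)⟩ = 0, where ∇h(W) = 2(I − W∘W)^{−⊤} ∘ W and ⟨·,·⟩ is the trace/Frobenius inner product. In particular, h is η-invex. -/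

import Mathlib

open Matrix

noncomputable section

/-- entrywise (Hadamard) division, with convention a/0 = 0. -/
def hdiv {d : ℕ} (A B : Matrix (Fin d) (Fin d) ℝ) : Matrix (Fin d) (Fin d) ℝ :=
  Matrix.of fun i j => if B i j = 0 then 0 else A i j / B i j

/-- Frobenius / trace inner product. -/
def fip {d : ℕ} (A B : Matrix (Fin d) (Fin d) ℝ) : ℝ := (Aᵀ * B).trace

namespace DagmaAux

variable {d : ℕ}

/-- the determinant as a continuous multilinear map in the rows -/
def detCM (d : ℕ) : ContinuousMultilinearMap ℝ (fun _ : Fin d => (Fin d → ℝ)) ℝ where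
  toMultilinearMap :=
    (Matrix.detRowAlternating : (Fin d → ℝ) [⋀^Fin d]→ₗ[ℝ] ℝ).toMultilinearMap
  cont := by
    have : Continuous fun A : Matrix (Fin d) (Fin d) ℝ => A.det := continuous_id.matrix_det
    exact this

lemma detCM_apply (A : Matrix (Fin d) (Fin d) ℝ) : detCM d (fun i => A i) = A.det := rfl

lemma sum_det_update (A N : Matrix (Fin d) (Fin d) ℝ) :
    ∑ i, (A.updateRow i ((N * A) i)).det = N.trace * A.det := by
  have h : ∀ i, (A.updateRow i ((N * A) i)).det = N i i * A.det := by
    intro i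
    have hrow : (N * A) i = ∑ k, N i k • A k := by
      ext j
      simp [Matrix.mul_apply, Finset.sum_apply]
    rw [hrow, Matrix.det_updateRow_sum]
    simp
  simp_rw [h]
  rw [← Finset.sum_mul, Matrix.trace]
  rfl

lemma entry_hasDerivAt (M : Matrix (Fin d) (Fin d) ℝ) (t : ℝ) (i j : Fin d) :
    HasDerivAt (fun s : ℝ => NormedSpace.exp (s • M) i j)
      ((NormedSpace.exp (t • M) * M) i j) t := by
  letI : SeminormedRing (Matrix (Fin d) (Fin d) ℝ) := Matrix.linftyOpSemiNormedRing
  letI : NormedRing (Matrix (Fin d) (Fin d) ℝ) := Matrix.linftyOpNormedRing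
  letI : NormedAlgebra ℝ (Matrix (Fin d) (Fin d) ℝ) := Matrix.linftyOpNormedAlgebra
  have h := hasDerivAt_exp_smul_const (𝕂 := ℝ) M t
  let L : Matrix (Fin d) (Fin d) ℝ →ₗ[ℝ] ℝ :=
    (LinearMap.proj j : (Fin d → ℝ) →ₗ[ℝ] ℝ).comp
      (LinearMap.proj i : Matrix (Fin d) (Fin d) ℝ →ₗ[ℝ] (Fin d → ℝ))
  have hL := (LinearMap.toContinuousLinearMap L).hasFDerivAt
    (x := NormedSpace.exp (t • M))
  exact (hL.comp_hasDerivAt t h : _)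

lemma exp_mul_comm (M : Matrix (Fin d) (Fin d) ℝ) (t : ℝ) :
    NormedSpace.exp (t • M) * M = M * NormedSpace.exp (t • M) := by
  letI : SeminormedRing (Matrix (Fin d) (Fin d) ℝ) := Matrix.linftyOpSemiNormedRing
  letI : NormedRing (Matrix (Fin d) (Fin d) ℝ) := Matrix.linftyOpNormedRing
  letI : NormedAlgebra ℝ (Matrix (Fin d) (Fin d) ℝ) := Matrix.linftyOpNormedAlgebra
  exact ((Commute.refl M).smul_left t).exp_left

lemma det_exp (M : Matrix (Fin d) (Fin d) ℝ) :
    (NormedSpace.exp M).det = Real.exp M.trace := by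
  set c := M.trace with hc
  have hE : ∀ t : ℝ, HasDerivAt
      (fun s : ℝ => (fun i => NormedSpace.exp (s • M) i : ∀ _ : Fin d, Fin d → ℝ))
      (fun i => (NormedSpace.exp (t • M) * M) i) t := by
    intro t
    rw [hasDerivAt_pi]
    intro i
    rw [hasDerivAt_pi]
    intro j
    exact entry_hasDerivAt M t i j
  have hdet : ∀ t : ℝ, HasDerivAt (fun s : ℝ => (NormedSpace.exp (s • M)).det)
      (c * (NormedSpace.exp (t • M)).det) t := by
    intro t
    have h1 : HasDerivAt
        (fun s : ℝ => (detCM d) (fun i => NormedSpace.exp (s • M) i))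
        ((detCM d).linearDeriv (fun i => NormedSpace.exp (t • M) i)
          (fun i => (NormedSpace.exp (t • M) * M) i)) t :=
      (ContinuousMultilinearMap.hasFDerivAt (detCM d)
        (fun i => NormedSpace.exp (t • M) i)).comp_hasDerivAt t (hE t)
    have h2 : (detCM d).linearDeriv (fun i => NormedSpace.exp (t • M) i)
        (fun i => (NormedSpace.exp (t • M) * M) i) = c * (NormedSpace.exp (t • M)).det := by
      rw [ContinuousMultilinearMap.linearDeriv_apply]
      have : ∀ i : Fin d, (detCM d)
            (Function.update (fun k => NormedSpace.exp (t • M) k) i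
              ((NormedSpace.exp (t • M) * M) i))
          = ((NormedSpace.exp (t • M)).updateRow i
              ((M * NormedSpace.exp (t • M)) i)).det := by
        intro i
        rw [← exp_mul_comm]
        rfl
      simp_rw [this]
      rw [sum_det_update]
    rw [← h2]
    exact h1
  have key : ∀ t : ℝ, HasDerivAt
      (fun s : ℝ => (NormedSpace.exp (s • M)).det * Real.exp (-(c * s))) 0 t := by
    intro t
    have hexp : HasDerivAt (fun s : ℝ => Real.exp (-(c * s)))
        (Real.exp (-(c * t)) * (-c)) t := by
      have h0 : HasDerivAt (fun s : ℝ => -(c * s)) (-c) t := by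
        have h00 := ((hasDerivAt_id t).const_mul c).neg
        simp only [mul_one] at h00
        exact h00
      exact h0.exp
    have := (hdet t).mul hexp
    exact this.congr_deriv (by ring)
  have hconst : ∀ t : ℝ,
      (NormedSpace.exp (t • M)).det * Real.exp (-(c * t))
        = (NormedSpace.exp ((0:ℝ) • M)).det * Real.exp (-(c * 0)) := by
    intro t
    exact is_const_of_deriv_eq_zero (fun s => (key s).differentiableAt)
      (fun s => (key s).deriv) t 0
  have h0 : (NormedSpace.exp ((0:ℝ) • M)).det * Real.exp (-(c * 0)) = 1 := by
    simp [NormedSpace.exp_zero]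
  have h1 := hconst 1
  rw [h0, one_smul] at h1
  have hne : Real.exp (-(c * 1)) ≠ 0 := Real.exp_ne_zero _
  have : (NormedSpace.exp M).det = (Real.exp (-(c * 1)))⁻¹ := by
    field_simp at h1 ⊢
    linarith [h1]
  rw [this, ← Real.exp_neg]
  norm_num

end DagmaAux

theorem dagma_h_invex (d : ℕ) (W U : Matrix (Fin d) (Fin d) ℝ)
    (mlog : Matrix (Fin d) (Fin d) ℝ → Matrix (Fin d) (Fin d) ℝ)
    -- all entries of W are nonzero
    (hWnz : ∀ i j, W i j ≠ 0)
    -- spectral radius of W ∘ W (resp. U ∘ U) is less than 1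
    (hWρ : ∀ μ ∈ spectrum ℂ ((W.hadamard W).map (algebraMap ℝ ℂ)), ‖μ‖ < 1)
    (hUρ : ∀ μ ∈ spectrum ℂ ((U.hadamard U).map (algebraMap ℝ ℂ)), ‖μ‖ < 1)
    -- mlog is a matrix logarithm on the matrices involved
    (hlogW : NormedSpace.exp (mlog (1 - W.hadamard W)) = 1 - W.hadamard W)
    (hlogU : NormedSpace.exp (mlog (1 - U.hadamard U)) = 1 - U.hadamard U)
    -- simultaneous diagonalizability surrogate: everything in sight commutes
    (hcomm₁ : Commute (1 - W.hadamard W) (1 - U.hadamard U))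
    (hcomm₂ : Commute (1 - W.hadamard W) (mlog (1 - U.hadamard U)))
    (hcomm₃ : Commute (1 - W.hadamard W) (mlog (1 - W.hadamard W)))
    (hcomm₄ : Commute (mlog (1 - U.hadamard U)) (mlog (1 - W.hadamard W)))
    -- h and η and the gradient of h
    (h : Matrix (Fin d) (Fin d) ℝ → ℝ)
    (hh : ∀ V : Matrix (Fin d) (Fin d) ℝ, h V = -Real.log (1 - V.hadamard V).det)
    (η gradh : Matrix (Fin d) (Fin d) ℝ)
    (hη : η = hdiv ((-(1/2) : ℝ) •
      ((1 - W.hadamard W) * (mlog (1 - U.hadamard U) - mlog (1 - W.hadamard W)))) W)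
    (hgrad : gradh = (2 : ℝ) • (((1 - W.hadamard W)⁻¹)ᵀ.hadamard W)) :
    h U - h W - fip η gradh = 0 := by
  set A : Matrix (Fin d) (Fin d) ℝ := 1 - W.hadamard W with hA
  set B : Matrix (Fin d) (Fin d) ℝ := 1 - U.hadamard U with hB
  have hdetA : A.det = Real.exp (mlog A).trace := by
    conv_lhs => rw [← hlogW]
    exact DagmaAux.det_exp _
  have hdetB : B.det = Real.exp (mlog B).trace := by
    conv_lhs => rw [← hlogU]
    exact DagmaAux.det_exp _
  have hlogdetA : Real.log A.det = (mlog A).trace := by rw [hdetA, Real.log_exp]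
  have hlogdetB : Real.log B.det = (mlog B).trace := by rw [hdetB, Real.log_exp]
  have hAunit : IsUnit A.det := by
    rw [hdetA]; exact (Real.exp_pos _).ne'.isUnit
  have hinv : A⁻¹ * A = 1 := Matrix.nonsing_inv_mul _ hAunit
  set X : Matrix (Fin d) (Fin d) ℝ := A * (mlog B - mlog A) with hX
  have hfip : fip η gradh = (mlog A).trace - (mlog B).trace := by
    have hterm : ∀ i k : Fin d,
        (hdiv ((-(1/2) : ℝ) • X) W) k i * (((2 : ℝ) • ((A⁻¹)ᵀ.hadamard W)) k i)
          = -(X k i * A⁻¹ i k) := by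
      intro i k
      simp only [hdiv, Matrix.of_apply, Matrix.smul_apply, smul_eq_mul,
        Matrix.hadamard_apply, Matrix.transpose_apply, if_neg (hWnz k i)]
      rw [div_mul_eq_mul_div,
        show -(1/2) * X k i * (2 * (A⁻¹ i k * W k i)) = -(X k i * A⁻¹ i k) * W k i by ring]
      exact mul_div_cancel_right₀ _ (hWnz k i)
    have h1 : fip η gradh = -((X * A⁻¹).trace) := by
      rw [hη, hgrad, fip]
      have lhs_eq : ((hdiv ((-(1/2) : ℝ) • X) W)ᵀ * ((2 : ℝ) • ((A⁻¹)ᵀ.hadamard W))).trace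
          = ∑ i, ∑ k, (hdiv ((-(1/2) : ℝ) • X) W) k i
              * (((2 : ℝ) • ((A⁻¹)ᵀ.hadamard W)) k i) := by
        simp [Matrix.trace, Matrix.mul_apply, Matrix.diag]
      rw [lhs_eq]
      simp_rw [hterm]
      rw [Matrix.trace]
      simp only [Matrix.diag_apply, Matrix.mul_apply]
      rw [← Finset.sum_neg_distrib]
      rw [Finset.sum_comm]
      congr 1
      ext i
      rw [← Finset.sum_neg_distrib]
    have h2 : (X * A⁻¹).trace = (mlog B - mlog A).trace := by
      rw [hX, Matrix.trace_mul_cycle, hinv, one_mul]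
    rw [h1, h2, Matrix.trace_sub]
    ring
  rw [hh U, hh W, ← hA, ← hB, hlogdetA, hlogdetB, hfip]
  ring
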